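/- Let p be a prime integer and M = ℤ ⊕ ℤ(p^∞) as a ℤ-module. Then for every prime integer q, the submodule qM = qℤ ⊕ ℤ(p^∞) is a prime submodule of M with (qM :_ℤ M) = (q), and the torsion submodule T(M) = 0 ⊕ ℤ(p^∞) is a prime submodule with (T(M) :_ℤ M) = (0). -/

import Mathlib

open Submodule

variable {R : Type*} [CommRing R] {M : Type*} [AddCommGroup M] [Module R M]

/-- A submodule `N` of `M` is *prime* if `N ≠ M` and whenever `r • m ∈ N`,
either `r ∈ (N :ᵣ M)` or `m ∈ N`. Here `(N :ᵣ M)` is `N.colon ⊤`. -/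
def IsPrimeSubmodule (N : Submodule R M) : Prop :=
  N ≠ ⊤ ∧ ∀ (r : R) (m : M), r • m ∈ N → r ∈ N.colon ⊤ ∨ m ∈ N

/-- The prime spectrum of the module `M`: the set of prime submodules. -/
def MSpec (R M : Type*) [CommRing R] [AddCommGroup M] [Module R M] :=
  {P : Submodule R M // IsPrimeSubmodule P}

/-- `V(N) = {P ∈ Spec(M) | (N : M) ⊆ (P : M)}`. -/
def VV (N : Submodule R M) : Set (MSpec R M) :=
  {P | N.colon ⊤ ≤ P.1.colon ⊤}

/-- The basic open set `X_r = Spec(M) \ V(rM)`. -/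
def Xb (r : R) : Set (MSpec R M) :=
  (VV (Ideal.span {r} • (⊤ : Submodule R M)))ᶜ


/-- The Prüfer `p`-group `ℤ(p^∞)`, realized as the `p`-primary torsion submodule of the
`ℤ`-module `ℚ/ℤ`. -/
def PruferModule (p : ℕ) : Submodule ℤ (ℚ ⧸ Submodule.span ℤ {(1 : ℚ)}) where
  carrier := {x | ∃ n : ℕ, (p : ℤ) ^ n • x = 0}
  add_mem' := by
    rintro a b ⟨n, hn⟩ ⟨m, hm⟩
    refine ⟨n + m, ?_⟩
    have h1 : ((p : ℤ) ^ (n + m)) • a = 0 := by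
      rw [pow_add, mul_comm, mul_smul, hn, smul_zero]
    have h2 : ((p : ℤ) ^ (n + m)) • b = 0 := by
      rw [pow_add, mul_smul, hm, smul_zero]
    rw [smul_add, h1, h2, add_zero]
  zero_mem' := ⟨0, smul_zero _⟩
  smul_mem' := by
    rintro c x ⟨n, hn⟩
    exact ⟨n, by rw [smul_comm, hn, smul_zero]⟩

/-- For `M = ℤ ⊕ ℤ(p^∞)`: for every prime integer `q`, `qM = qℤ ⊕ ℤ(p^∞)` is a prime
submodule with `(qM : M) = (q)`, and the torsion submodule `T(M) = 0 ⊕ ℤ(p^∞)` is a prime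
submodule with `(T(M) : M) = (0)`. -/

lemma prufer_div (p : ℕ) (hp : p.Prime) (q : ℤ) (hq : Prime q)
    (x : PruferModule p) : ∃ y : PruferModule p, q • y = x := by
  obtain ⟨n, hn⟩ := x.2
  by_cases hdvd : q ∣ (p : ℤ)
  · -- q = ±p; use divisibility of ℚ/ℤ by p, then adjust by the unit
    have hp' : Prime ((p : ℕ) : ℤ) := Int.prime_iff_natAbs_prime.mpr (by simpa using hp)
    obtain ⟨u, hu⟩ := (hq.dvd_prime_iff_associated hp').mp hdvd
    -- hu : q * u = p  with u unit
    have hp0 : ((p : ℚ)) ≠ 0 := by exact_mod_cast hp.ne_zero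
    obtain ⟨a, ha⟩ := Submodule.Quotient.mk_surjective _ x.1
    set b : ℚ := a / (p : ℚ) with hb
    have hyy : ((p : ℤ) ^ (n + 1)) • b = ((p : ℤ) ^ n) • a := by
      rw [zsmul_eq_mul, zsmul_eq_mul, hb]
      push_cast
      field_simp
      ring
    have hbmem : Submodule.Quotient.mk b ∈ PruferModule p := by
      refine ⟨n + 1, ?_⟩
      rw [← Submodule.Quotient.mk_smul, hyy, Submodule.Quotient.mk_smul, ha, hn]
    set y0 : PruferModule p := ⟨Submodule.Quotient.mk b, hbmem⟩
    have hpy : ((p : ℕ) : ℤ) • y0 = x := by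
      apply Subtype.ext
      show ((p : ℕ) : ℤ) • Submodule.Quotient.mk b = x.1
      rw [← Submodule.Quotient.mk_smul, ← ha]
      congr 1
      show ((p : ℕ) : ℤ) • b = a
      rw [zsmul_eq_mul, hb]
      field_simp
      push_cast
      ring
    refine ⟨(u : ℤ) • y0, ?_⟩
    rw [smul_smul, hu, hpy]
  · -- q coprime to p^n
    obtain ⟨u, v, huv⟩ := ((hq.coprime_iff_not_dvd.mpr hdvd).pow_right (n := n))
    refine ⟨u • x, ?_⟩
    have hx0 : ((p : ℤ) ^ n) • x = 0 := Subtype.ext hn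
    have h1 : q * u = 1 - v * (p:ℤ)^n := by linear_combination huv
    rw [smul_smul, h1, sub_smul, one_smul, mul_smul, hx0, smul_zero, sub_zero]

lemma span_smul_top_int (q : ℤ) :
    (Ideal.span {q} • (⊤ : Submodule ℤ ℤ)) = Ideal.span {q} := by
  rw [Ideal.smul_eq_mul, Ideal.mul_top]

theorem spec_int_prod_prufer (p : ℕ) (hp : p.Prime) :
    (∀ q : ℤ, Prime q →
      IsPrimeSubmodule (Ideal.span {q} • (⊤ : Submodule ℤ (ℤ × PruferModule p))) ∧
      (Ideal.span {q} • (⊤ : Submodule ℤ (ℤ × PruferModule p))).colon ⊤ = Ideal.span {q} ∧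
      Ideal.span {q} • (⊤ : Submodule ℤ (ℤ × PruferModule p)) =
        (Ideal.span {q} • (⊤ : Submodule ℤ ℤ)).prod (⊤ : Submodule ℤ (PruferModule p))) ∧
    Submodule.torsion ℤ (ℤ × PruferModule p) =
      (⊥ : Submodule ℤ ℤ).prod (⊤ : Submodule ℤ (PruferModule p)) ∧
    IsPrimeSubmodule ((⊥ : Submodule ℤ ℤ).prod (⊤ : Submodule ℤ (PruferModule p))) ∧
    ((⊥ : Submodule ℤ ℤ).prod (⊤ : Submodule ℤ (PruferModule p))).colon ⊤ = ⊥ := by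

  have hprod : ∀ q : ℤ, Prime q →
      Ideal.span {q} • (⊤ : Submodule ℤ (ℤ × PruferModule p)) =
        (Ideal.span {q} • (⊤ : Submodule ℤ ℤ)).prod (⊤ : Submodule ℤ (PruferModule p)) := by
    intro q hq
    apply le_antisymm
    · refine Submodule.smul_le.mpr ?_
      rintro r hr ⟨a, x⟩ -
      obtain ⟨c, hc⟩ := Ideal.mem_span_singleton.mp hr
      refine ⟨?_, trivial⟩
      rw [span_smul_top_int]
      exact Ideal.mem_span_singleton.mpr ⟨c * a, by simp [hc]; ring⟩
    · rintro ⟨a, x⟩ ⟨ha, -⟩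
      rw [span_smul_top_int] at ha
      obtain ⟨c, hc⟩ := Ideal.mem_span_singleton.mp ha
      obtain ⟨y, hy⟩ := prufer_div p hp q hq x
      have : (a, x) = q • ((c, y) : ℤ × PruferModule p) := by
        have hc' : a = q * c := hc
        simp [Prod.ext_iff, hc', hy, smul_eq_mul]
      rw [this]
      exact Submodule.smul_mem_smul (Ideal.mem_span_singleton_self q) trivial
  have hcolon : ∀ q : ℤ, Prime q →
      (Ideal.span {q} • (⊤ : Submodule ℤ (ℤ × PruferModule p))).colon ⊤ = Ideal.span {q} := by
    intro q hq
    ext r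
    rw [Submodule.mem_colon]
    constructor
    · intro h
      have := h (1, 0) trivial
      rw [hprod q hq] at this
      obtain ⟨h1, -⟩ := this
      rw [span_smul_top_int] at h1
      simpa using h1
    · intro hr m _
      rw [hprod q hq]
      refine ⟨?_, trivial⟩
      rw [span_smul_top_int]
      obtain ⟨c, hc⟩ := Ideal.mem_span_singleton.mp hr
      exact Ideal.mem_span_singleton.mpr ⟨c * m.1, by simp [hc, smul_eq_mul]; ring⟩
  refine ⟨fun q hq => ⟨⟨?_, ?_⟩, hcolon q hq, hprod q hq⟩, ?_, ⟨?_, ?_⟩, ?_⟩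
  · -- qM ≠ ⊤
    intro htop
    have : ((1 : ℤ), (0 : PruferModule p)) ∈
        Ideal.span {q} • (⊤ : Submodule ℤ (ℤ × PruferModule p)) := by rw [htop]; trivial
    rw [hprod q hq] at this
    obtain ⟨h1, -⟩ := this
    rw [span_smul_top_int] at h1
    exact hq.not_unit (isUnit_of_dvd_one (Ideal.mem_span_singleton.mp h1))
  · -- prime condition
    rintro r ⟨a, x⟩ hmem
    rw [hprod q hq] at hmem
    obtain ⟨h1, -⟩ := hmem
    rw [span_smul_top_int] at h1
    have hdvd : q ∣ r * a := by
      simpa [smul_eq_mul] using Ideal.mem_span_singleton.mp h1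
    rcases hq.dvd_mul.mp hdvd with h | h
    · left
      rw [hcolon q hq]
      exact Ideal.mem_span_singleton.mpr h
    · right
      rw [hprod q hq]
      refine ⟨?_, trivial⟩
      rw [span_smul_top_int]
      exact Ideal.mem_span_singleton.mpr h
  · -- torsion = ⊥.prod ⊤
    ext ⟨a, x⟩
    constructor
    · rintro ⟨⟨r, hr⟩, hrx⟩
      have hr0 : r ≠ 0 := nonZeroDivisors.ne_zero hr
      have ha : r • a = 0 := congrArg Prod.fst hrx
      refine ⟨?_, trivial⟩
      have : a = 0 := by
        rcases mul_eq_zero.mp ha with h | h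
        · exact absurd h hr0
        · exact h
      simpa using this
    · rintro ⟨ha, -⟩
      have ha' : a = 0 := ha
      obtain ⟨n, hn⟩ := x.2
      refine ⟨⟨(p : ℤ)^n, mem_nonZeroDivisors_of_ne_zero (pow_ne_zero _ (by exact_mod_cast hp.ne_zero))⟩, ?_⟩
      have hx0 : ((p : ℤ) ^ n) • x = 0 := Subtype.ext hn
      show ((p : ℤ)^n) • (a, x) = 0
      rw [Prod.smul_mk, ha', smul_zero, hx0]
      rfl
  · -- ⊥.prod ⊤ ≠ ⊤
    intro htop
    have : ((1 : ℤ), (0 : PruferModule p)) ∈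
        (⊥ : Submodule ℤ ℤ).prod (⊤ : Submodule ℤ (PruferModule p)) := by rw [htop]; trivial
    exact (one_ne_zero : (1 : ℤ) ≠ 0) (by simpa using this.1)
  · -- prime condition for torsion
    rintro r ⟨a, x⟩ hmem
    obtain ⟨h1, -⟩ := hmem
    have h1' : r * a = 0 := by simpa [smul_eq_mul] using h1
    rcases mul_eq_zero.mp h1' with h | h
    · left
      rw [Submodule.mem_colon]
      intro m _
      subst h
      rw [zero_smul]
      exact zero_mem _
    · right
      exact ⟨by simpa using h, trivial⟩
  · -- colon of torsion = ⊥
    ext r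
    rw [Submodule.mem_colon]
    constructor
    · intro h
      have := (h (1, 0) trivial).1
      simpa using this
    · intro hr m _
      have : r = 0 := hr
      subst this
      rw [zero_smul]
      exact zero_mem _
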